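/- Fix an integer n ≥ 4 and write κ_I := |I|(|I|−1)/2 + |I|·(n−|I|) for nonempty I ⊆ Fin n. Let J be a nonempty subset of Fin n not containing the last element n−1, and let ℓ = |J| (so 1 ≤ ℓ ≤ n−1). Then the number of vectors b : Fin n → ℕ satisfying: (a) ∑_i b_i = n(n−1)/2 − 1; (b) ∑_{i∈I} b_i + 1 ≤ κ_I for every nonempty I ⊆ Fin n; (c) ∑_{j∈J} b_j + 1 = κ_J; and (d) ∑_{j∈J'} b_j + 1 < κ_{J'} for every J' with J ⊊ J' ⊆ Fin n ∖ {n−1}, equals ℓ^{ℓ−2} · (n−ℓ)^{(n−ℓ)−2}, where the exponents use truncated natural subtraction (so each factor equals 1 when ℓ ≤ 2, respectively n−ℓ ≤ 2). -/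

import Mathlib

open Finset

set_option linter.unusedSectionVars false

/-- triangular number `k(k-1)/2`. -/
def Tn (k : ℕ) : ℕ := k * (k - 1) / 2

lemma Tn_succ (k : ℕ) : Tn (k + 1) = Tn k + k := by
  unfold Tn
  rcases k with _ | k
  · rfl
  · have h : (k + 1 + 1) * (k + 1 + 1 - 1) = (k + 1) * (k + 1 - 1) + 2 * (k + 1) := by
      simp only [Nat.add_sub_cancel]; ring
    omega

lemma Tn_add (a b : ℕ) : Tn (a + b) = Tn a + Tn b + a * b := by
  induction b with
  | zero => simp [Tn]
  | succ b ih =>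
      have h1 : a + (b + 1) = (a + b) + 1 := by ring
      rw [h1, Tn_succ, ih, Tn_succ]
      have : a * (b + 1) = a * b + a := by ring
      omega

lemma two_Tn (k : ℕ) : 2 * Tn k = k * (k - 1) := by
  induction k with
  | zero => rfl
  | succ k ih =>
      have h1 := Tn_succ k
      have h : k * (k - 1) + 2 * k = (k + 1) * k := by
        rcases k with _ | j
        · rfl
        · simp only [Nat.add_sub_cancel]; ring
      have h2 : (k + 1) * (k + 1 - 1) = (k + 1) * k := by simp
      omega

variable {α : Type*} [DecidableEq α]

/-- The model set: nonnegative vectors supported on `S`, of total `Tn |S|`, whose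
partial sums over every `K ⊆ S` are at least `Tn |K|`, strictly when `r ∈ K ⊊ S`. -/
def BsetF (S : Finset α) (r : α) : Set (α → ℕ) :=
  {d | (∀ x, x ∉ S → d x = 0) ∧ (∑ x ∈ S, d x = Tn S.card) ∧
       (∀ K ⊆ S, Tn K.card ≤ ∑ x ∈ K, d x) ∧
       (∀ K ⊆ S, r ∈ K → K ≠ S → Tn K.card + 1 ≤ ∑ x ∈ K, d x)}

namespace BsetF

variable {S : Finset α} {r : α} {d : α → ℕ}

lemma zero_off (hd : d ∈ BsetF S r) : ∀ x, x ∉ S → d x = 0 := hd.1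
lemma sum_eq (hd : d ∈ BsetF S r) : ∑ x ∈ S, d x = Tn S.card := hd.2.1
lemma lower (hd : d ∈ BsetF S r) : ∀ K ⊆ S, Tn K.card ≤ ∑ x ∈ K, d x := hd.2.2.1
lemma strict (hd : d ∈ BsetF S r) :
    ∀ K ⊆ S, r ∈ K → K ≠ S → Tn K.card + 1 ≤ ∑ x ∈ K, d x := hd.2.2.2

/-- Complement form of `lower`: upper bound on sums over subsets. -/
lemma upper (hd : d ∈ BsetF S r) {K : Finset α} (hK : K ⊆ S) :
    ∑ x ∈ K, d x + Tn (S \ K).card ≤ Tn S.card := by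
  have h1 := BsetF.lower hd (S \ K) sdiff_subset
  have h2 : ∑ x ∈ S \ K, d x + ∑ x ∈ K, d x = ∑ x ∈ S, d x := Finset.sum_sdiff hK
  have h3 := BsetF.sum_eq hd
  omega

/-- Strict complement form. -/
lemma upper_strict (hd : d ∈ BsetF S r) {K : Finset α} (hK : K ⊆ S)
    (hr : r ∈ S) (hrK : r ∉ K) (hKne : K.Nonempty) :
    ∑ x ∈ K, d x + Tn (S \ K).card + 1 ≤ Tn S.card := by
  have hsub : S \ K ⊆ S := sdiff_subset
  have hrmem : r ∈ S \ K := Finset.mem_sdiff.2 ⟨hr, hrK⟩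
  have hne : S \ K ≠ S := by
    intro h
    obtain ⟨x, hx⟩ := hKne
    have hxS : x ∈ S := hK hx
    rw [← h] at hxS
    exact (Finset.mem_sdiff.1 hxS).2 hx
  have h1 := BsetF.strict hd (S \ K) hsub hrmem hne
  have h2 : ∑ x ∈ S \ K, d x + ∑ x ∈ K, d x = ∑ x ∈ S, d x := Finset.sum_sdiff hK
  have h3 := BsetF.sum_eq hd
  omega

/-- off-root coordinates are at most `|S| - 2`. -/
lemma le_off_root (hd : d ∈ BsetF S r) (hr : r ∈ S) {i : α} (hi : i ∈ S) (hir : i ≠ r) :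
    d i + 2 ≤ S.card := by
  have hK : {i} ⊆ S := Finset.singleton_subset_iff.2 hi
  have h := BsetF.upper_strict hd hK hr (by simp [hir.symm]) ⟨i, Finset.mem_singleton_self i⟩
  have hcard : (S \ {i}).card = S.card - 1 := by
    rw [Finset.sdiff_singleton_eq_erase, Finset.card_erase_of_mem hi]
  have hScard : 1 ≤ S.card := Finset.card_pos.2 ⟨i, hi⟩
  have hTS : Tn S.card = Tn (S.card - 1) + (S.card - 1) := by
    have h4 := Tn_succ (S.card - 1)
    have h2 : S.card - 1 + 1 = S.card := by omega
    rw [h2] at h4; omega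
  simp only [Finset.sum_singleton, Finset.card_singleton] at h
  rw [hcard] at h
  have h2card : 2 ≤ S.card := Finset.one_lt_card.2 ⟨i, hi, r, hr, hir⟩
  have hT1 : Tn 1 = 0 := rfl
  omega

/-- Key combinatorial inequality (used twice to get uniqueness of shift). -/
lemma L1 {d d' : α → ℕ} (hr : r ∈ S) (hd : d ∈ BsetF S r) (hd' : d' ∈ BsetF S r)
    {t : ℕ} (ht : 1 ≤ t) {W : Finset α} (hWS : W ⊆ S.erase r)
    (hwrap : ∀ i ∈ W, d i + S.card = d' i + t) :
    W.card + 1 ≤ t := by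
  rcases W.eq_empty_or_nonempty with hW | hW
  · subst hW; simpa using ht
  · have hWS' : W ⊆ S := hWS.trans (Finset.erase_subset r S)
    have hrW : r ∉ W := fun h => (Finset.mem_erase.1 (hWS h)).1 rfl
    have h1 : Tn W.card ≤ ∑ x ∈ W, d x := BsetF.lower hd W hWS'
    have h2 : ∑ x ∈ W, d' x + Tn (S \ W).card + 1 ≤ Tn S.card :=
      BsetF.upper_strict hd' hWS' hr hrW hW
    have hcard : (S \ W).card + W.card = S.card := by
      rw [Finset.card_sdiff_of_subset hWS']
      have : W.card ≤ S.card := Finset.card_le_card hWS'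
      omega
    have h5 : Tn S.card = Tn (S \ W).card + Tn W.card + (S \ W).card * W.card := by
      conv_lhs => rw [← hcard]
      exact Tn_add _ _
    have h6 : ∑ x ∈ W, d x + W.card * S.card = ∑ x ∈ W, d' x + W.card * t := by
      have h7 : ∑ x ∈ W, (d x + S.card) = ∑ x ∈ W, (d' x + t) :=
        Finset.sum_congr rfl (fun i hi => hwrap i hi)
      rw [Finset.sum_add_distrib, Finset.sum_add_distrib] at h7
      simp only [Finset.sum_const, smul_eq_mul] at h7
      omega
    have hkey : W.card * S.card + 1 ≤ (S \ W).card * W.card + W.card * t := by omega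
    by_contra hcon
    push_neg at hcon
    have htw : t ≤ W.card := by omega
    have h10 : W.card * t ≤ W.card * W.card := Nat.mul_le_mul_left W.card htw
    have h9 : (S \ W).card * W.card + W.card * W.card = S.card * W.card := by
      have h8 : ((S \ W).card + W.card) * W.card = S.card * W.card := by rw [hcard]
      nlinarith [h8]
    have h11 : W.card * S.card = S.card * W.card := Nat.mul_comm _ _
    omega

end BsetF

lemma cast_lift {m a b t : ℕ} (ha : a + 2 ≤ m) (hb : b + 2 ≤ m) (ht : t < m)
    (h : (a : ZMod m) = (b : ZMod m) + ((t : ℕ) : ZMod m)) :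
    a = b + t ∨ a + m = b + t := by
  have h2 : ((a : ℕ) : ZMod m) = ((b + t : ℕ) : ZMod m) := by push_cast; exact h
  have h3 : a ≡ b + t [MOD m] := (ZMod.natCast_eq_natCast_iff _ _ _).1 h2
  have h4 : a % m = (b + t) % m := h3
  have h5 : a % m = a := Nat.mod_eq_of_lt (by omega)
  rcases lt_or_ge (b + t) m with h6 | h6
  · left; rw [h5, Nat.mod_eq_of_lt h6] at h4; omega
  · right
    have h7 : (b + t) % m = b + t - m := by
      have h8 : b + t - m < m := by omega
      rw [Nat.mod_eq_sub_mod h6, Nat.mod_eq_of_lt h8]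
    omega

namespace BsetF

variable {S : Finset α} {r : α}

/-- Uniqueness: two elements of `BsetF` whose off-root parts differ by a constant
shift mod `|S|` coincide (and the shift is trivial). -/
lemma shift_unique (hr : r ∈ S) {d d' : α → ℕ}
    (hd : d ∈ BsetF S r) (hd' : d' ∈ BsetF S r) {j j' : ZMod S.card}
    (h : ∀ i ∈ S.erase r, (d i : ZMod S.card) + j = (d' i : ZMod S.card) + j') :
    d = d' ∧ j = j' := by
  have hm1 : 1 ≤ S.card := Finset.card_pos.2 ⟨r, hr⟩
  rcases eq_or_lt_of_le hm1 with hm | hm2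
  · -- S.card = 1 : S = {r}
    obtain ⟨x, hx⟩ := Finset.card_eq_one.1 hm.symm
    have hxr : x = r := by
      have : r ∈ ({x} : Finset α) := hx ▸ hr
      exact (Finset.mem_singleton.1 this).symm
    subst hxr
    constructor
    · funext y
      by_cases hy : y ∈ S
      · rw [hx] at hy
        have hy' : y = x := by simpa using hy
        subst hy'
        have e1 := BsetF.sum_eq hd
        have e2 := BsetF.sum_eq hd'
        rw [hx] at e1 e2
        simp only [Finset.sum_singleton, Finset.card_singleton] at e1 e2
        rw [e1, e2]
      · rw [BsetF.zero_off hd y hy, BsetF.zero_off hd' y hy]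
    · haveI : Subsingleton (ZMod S.card) := by
        rw [← hm]; exact Unique.instSubsingleton
      exact Subsingleton.elim j j'
  · -- S.card ≥ 2
    haveI : NeZero S.card := ⟨by omega⟩
    set τ : ZMod S.card := j - j' with hτ
    set t : ℕ := τ.val with ht
    have htm : t < S.card := ZMod.val_lt τ
    have hcast : ((t : ℕ) : ZMod S.card) = τ := ZMod.natCast_rightInverse τ
    have hcong : ∀ i ∈ S.erase r,
        (d' i : ZMod S.card) = (d i : ZMod S.card) + ((t : ℕ) : ZMod S.card) := by
      intro i hi
      have := h i hi
      rw [hcast, hτ]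
      linear_combination -this
    have hdisj : ∀ i ∈ S.erase r, d' i = d i + t ∨ d' i + S.card = d i + t := by
      intro i hi
      obtain ⟨hiS, hir⟩ := And.symm (Finset.mem_erase.1 hi)
      exact cast_lift (BsetF.le_off_root hd' hr hiS hir) (BsetF.le_off_root hd hr hiS hir)
        htm (hcong i hi)
    have ht0 : t = 0 := by
      by_contra ht1
      have ht1' : 1 ≤ t := by omega
      set W : Finset α := (S.erase r).filter (fun i => d' i + S.card = d i + t) with hW
      have hWsub : W ⊆ S.erase r := Finset.filter_subset _ _
      have happ1 : W.card + 1 ≤ t := by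
        refine BsetF.L1 hr hd' hd ht1' hWsub ?_
        intro i hi
        exact (Finset.mem_filter.1 hi).2
      set W' : Finset α := (S.erase r) \ W with hW'
      have hW'sub : W' ⊆ S.erase r := sdiff_subset
      have happ2 : W'.card + 1 ≤ S.card - t := by
        refine BsetF.L1 hr hd hd' (by omega) hW'sub ?_
        intro i hi
        obtain ⟨hie, hiW⟩ := Finset.mem_sdiff.1 hi
        have hd2 := hdisj i hie
        have hnotwrap : ¬(d' i + S.card = d i + t) := by
          intro hcontra
          exact hiW (Finset.mem_filter.2 ⟨hie, hcontra⟩)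
        have : d' i = d i + t := by tauto
        omega
      have hcards : W'.card = (S.erase r).card - W.card := Finset.card_sdiff_of_subset hWsub
      have hecard : (S.erase r).card = S.card - 1 := Finset.card_erase_of_mem hr
      have hWle : W.card ≤ (S.erase r).card := Finset.card_le_card hWsub
      omega
    have heq : ∀ i ∈ S.erase r, d i = d' i := by
      intro i hi
      obtain ⟨hiS, hir⟩ := And.symm (Finset.mem_erase.1 hi)
      have hb1 := BsetF.le_off_root hd hr hiS hir
      have hb2 := BsetF.le_off_root hd' hr hiS hir
      rcases hdisj i hi with h1 | h1 <;> omega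
    constructor
    · funext y
      by_cases hy : y ∈ S
      · by_cases hyr : y = r
        · subst hyr
          have e1 : ∑ x ∈ S.erase y, d x + d y = Tn S.card := by
            rw [Finset.sum_erase_add S d hy]; exact BsetF.sum_eq hd
          have e2 : ∑ x ∈ S.erase y, d' x + d' y = Tn S.card := by
            rw [Finset.sum_erase_add S d' hy]; exact BsetF.sum_eq hd'
          have e3 : ∑ x ∈ S.erase y, d x = ∑ x ∈ S.erase y, d' x :=
            Finset.sum_congr rfl heq
          omega
        · exact heq y (Finset.mem_erase.2 ⟨hyr, hy⟩)
      · rw [BsetF.zero_off hd y hy, BsetF.zero_off hd' y hy]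
    · have hτ0 : τ = 0 := by
        rw [← hcast, ht0]; simp
      rw [hτ] at hτ0
      exact sub_eq_zero.1 hτ0

end BsetF

namespace BsetF

variable {S : Finset α} {r : α}

/-- Existence: every off-root residue vector mod `|S|` is realized by an element
of `BsetF S r`, up to a constant shift. -/
lemma exists_rep (hr : r ∈ S) (h : α → ZMod S.card) :
    ∃ d ∈ BsetF S r, ∃ c : ZMod S.card,
      ∀ i ∈ S.erase r, (d i : ZMod S.card) = h i + c := by
  classical
  have hm1 : 1 ≤ S.card := Finset.card_pos.2 ⟨r, hr⟩
  haveI : NeZero S.card := ⟨by omega⟩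
  -- the coset
  set Sc : Set (α → ℤ) := {y | (∀ x, x ∉ S → y x = 0) ∧ (∑ x ∈ S, y x = (Tn S.card : ℤ)) ∧
      ∃ c : ZMod S.card, ∀ i ∈ S.erase r, ((y i : ℤ) : ZMod S.card) = h i + c} with hScdef
  set F : (α → ℤ) → ℤ := fun y => ∑ x ∈ S, (2 * y x - ((S.card : ℤ) - 1))^2 with hFdef
  have hFnn : ∀ y, 0 ≤ F y := fun y => Finset.sum_nonneg (fun x _ => sq_nonneg _)
  -- Sc is nonempty
  have hne : Sc.Nonempty := by
    refine ⟨fun x => if x = r then ((Tn S.card : ℤ) - ∑ i ∈ S.erase r, ((h i).val : ℤ))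
      else if x ∈ S then ((h x).val : ℤ) else 0, ?_, ?_, 0, ?_⟩
    · intro x hx
      have hxr : x ≠ r := fun e => hx (e ▸ hr)
      simp [hxr, hx]
    · rw [← Finset.sum_erase_add S _ hr]
      have e1 : ∑ x ∈ S.erase r, (if x = r then ((Tn S.card : ℤ) - ∑ i ∈ S.erase r, ((h i).val : ℤ))
          else if x ∈ S then ((h x).val : ℤ) else 0) = ∑ i ∈ S.erase r, ((h i).val : ℤ) := by
        refine Finset.sum_congr rfl (fun x hx => ?_)
        obtain ⟨hxr, hxS⟩ := Finset.mem_erase.1 hx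
        simp [hxr, hxS]
      rw [e1]
      simp
    · intro i hi
      obtain ⟨hir, hiS⟩ := Finset.mem_erase.1 hi
      simp only [hir, if_false, hiS, if_true]
      push_cast
      rw [ZMod.natCast_rightInverse (h i)]
      simp
  -- minimizer of F over Sc
  have himgne : ((fun y => (F y).toNat) '' Sc).Nonempty := hne.image _
  obtain ⟨y₁, hy₁Sc, hy₁M⟩ := Nat.sInf_mem himgne
  have hminN : ∀ y ∈ Sc, sInf ((fun y => (F y).toNat) '' Sc) ≤ (F y).toNat :=
    fun y hy => Nat.sInf_le ⟨y, hy, rfl⟩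
  have hmin : ∀ y ∈ Sc, F y₁ ≤ F y := by
    intro y hy
    have h1 := hminN y hy
    have h0 : (F y₁).toNat = sInf ((fun y => (F y).toNat) '' Sc) := hy₁M
    have e1 : ((F y₁).toNat : ℤ) = F y₁ := Int.toNat_of_nonneg (hFnn _)
    have e2 : ((F y).toNat : ℤ) = F y := Int.toNat_of_nonneg (hFnn _)
    omega
  -- the lattice direction associated to K ⊆ S
  set lam : Finset α → α → ℤ :=
    fun K x => if x ∈ K then (S.card : ℤ) - K.card else if x ∈ S then -(K.card : ℤ) else 0
    with hlamdef
  have hcardcast : ∀ {K : Finset α}, K ⊆ S → ((S \ K).card : ℤ) = (S.card : ℤ) - K.card := by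
    intro K hK
    rw [Finset.card_sdiff_of_subset hK]
    have := Finset.card_le_card hK
    push_cast [Nat.cast_sub this]
    ring
  have hlam_split : ∀ (K : Finset α), K ⊆ S → ∀ g : α → ℤ,
      ∑ x ∈ S, lam K x * g x
        = ((S.card : ℤ) - K.card) * ∑ x ∈ K, g x - K.card * ∑ x ∈ S \ K, g x := by
    intro K hK g
    rw [← Finset.sum_sdiff hK]
    have e1 : ∑ x ∈ S \ K, lam K x * g x = ∑ x ∈ S \ K, -(K.card : ℤ) * g x := by
      refine Finset.sum_congr rfl (fun x hx => ?_)
      obtain ⟨hxS, hxK⟩ := Finset.mem_sdiff.1 hx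
      simp [hlamdef, hxK, hxS]
    have e2 : ∑ x ∈ K, lam K x * g x = ∑ x ∈ K, ((S.card : ℤ) - K.card) * g x := by
      refine Finset.sum_congr rfl (fun x hx => ?_)
      simp [hlamdef, hx]
    rw [e1, e2, ← Finset.mul_sum, ← Finset.mul_sum]
    ring
  have hlam_sum : ∀ (K : Finset α), K ⊆ S → ∑ x ∈ S, lam K x = 0 := by
    intro K hK
    have h2 := hlam_split K hK (fun _ => (1 : ℤ))
    simp only [Finset.sum_const, nsmul_eq_mul, mul_one] at h2
    rw [h2, hcardcast hK]
    ring
  have hlam_sq : ∀ (K : Finset α), K ⊆ S →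
      ∑ x ∈ S, (lam K x)^2 = (S.card : ℤ) * K.card * ((S.card : ℤ) - K.card) := by
    intro K hK
    have e0 : ∀ x ∈ S, (lam K x)^2 = lam K x * lam K x := fun x _ => sq (lam K x) ▸ by ring
    rw [Finset.sum_congr rfl e0, hlam_split K hK (lam K)]
    have e1 : ∑ x ∈ K, lam K x = ((S.card : ℤ) - K.card) * K.card := by
      have : ∀ x ∈ K, lam K x = (S.card : ℤ) - K.card := fun x hx => by simp [hlamdef, hx]
      rw [Finset.sum_congr rfl this]
      simp [mul_comm]
      ring
    have e2 : ∑ x ∈ S \ K, lam K x = -(K.card : ℤ) * (S \ K).card := by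
      have : ∀ x ∈ S \ K, lam K x = -(K.card : ℤ) := by
        intro x hx
        obtain ⟨hxS, hxK⟩ := Finset.mem_sdiff.1 hx
        simp [hlamdef, hxK, hxS]
      rw [Finset.sum_congr rfl this]
      simp [mul_comm]
    rw [e1, e2, hcardcast hK]
    ring
  have hlam_inner : ∀ (K : Finset α), K ⊆ S → ∀ y ∈ Sc,
      ∑ x ∈ S, lam K x * y x = (S.card : ℤ) * ∑ x ∈ K, y x - K.card * Tn S.card := by
    intro K hK y hy
    obtain ⟨hy0, hysum, -⟩ := hy
    have hsd : ∑ x ∈ S \ K, y x + ∑ x ∈ K, y x = (Tn S.card : ℤ) := by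
      rw [Finset.sum_sdiff hK]; exact hysum
    rw [hlam_split K hK y]
    have : ∑ x ∈ S \ K, y x = (Tn S.card : ℤ) - ∑ x ∈ K, y x := by omega
    rw [this]
    ring
  -- membership of shifted vectors
  have hmemlam : ∀ (K : Finset α), K ⊆ S → ∀ y ∈ Sc, ∀ ε : ℤ,
      (fun x => y x + ε * lam K x) ∈ Sc := by
    intro K hK y hy ε
    obtain ⟨hy0, hysum, c, hc⟩ := hy
    refine ⟨?_, ?_, c - (ε : ZMod S.card) * K.card, ?_⟩
    · intro x hx
      have hxK : x ∉ K := fun hxk => hx (hK hxk)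
      simp [hlamdef, hxK, hx, hy0 x hx]
    · rw [Finset.sum_add_distrib, hysum, ← Finset.mul_sum, hlam_sum K hK]
      ring
    · intro i hi
      have hlc : ((lam K i : ℤ) : ZMod S.card) = -(K.card : ZMod S.card) := by
        by_cases hiK : i ∈ K
        · simp only [hlamdef, hiK, if_true]
          push_cast
          simp
        · have hiS : i ∈ S := (Finset.mem_erase.1 hi).2
          simp only [hlamdef, hiK, if_false, hiS, if_true]
          push_cast
          ring
      push_cast
      rw [hlc, hc i hi]
      push_cast
      ring
  -- F-expansion along lam
  have hFval : ∀ (K : Finset α), K ⊆ S → ∀ y ∈ Sc, ∀ ε : ℤ,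
      F (fun x => y x + ε * lam K x)
        = F y + 8 * ε * ((S.card : ℤ) * ∑ x ∈ K, y x - K.card * Tn S.card)
            + 4 * ε^2 * ((S.card : ℤ) * K.card * ((S.card : ℤ) - K.card)) := by
    intro K hK y hy ε
    have hpt : ∀ x ∈ S, (2 * (y x + ε * lam K x) - ((S.card : ℤ) - 1))^2
        = (2 * y x - ((S.card : ℤ) - 1))^2 + ((8 * ε) * (lam K x * y x)
            + ((-4) * ε * ((S.card : ℤ) - 1)) * lam K x + (4 * ε^2) * (lam K x)^2) := by
      intro x _; ring
    show ∑ x ∈ S, (2 * (y x + ε * lam K x) - ((S.card : ℤ) - 1))^2 = _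
    rw [Finset.sum_congr rfl hpt, Finset.sum_add_distrib, Finset.sum_add_distrib,
      Finset.sum_add_distrib, ← Finset.mul_sum, ← Finset.mul_sum, ← Finset.mul_sum,
      hlam_inner K hK y hy, hlam_sum K hK, hlam_sq K hK]
    ring
  -- Step A: any minimizer lies in the (closed) permutohedron
  have hStepA : ∀ y ∈ Sc, (∀ z ∈ Sc, F y ≤ F z) → ∀ (K : Finset α), K ⊆ S →
      ((Tn K.card : ℤ) ≤ ∑ x ∈ K, y x ∧
        ∑ x ∈ K, y x ≤ (Tn K.card : ℤ) + K.card * ((S.card : ℤ) - K.card)) := by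
    intro y hy hmy K hK
    have h1 := hmy _ (hmemlam K hK y hy 1)
    have h2 := hmy _ (hmemlam K hK y hy (-1))
    rw [hFval K hK y hy 1] at h1
    rw [hFval K hK y hy (-1)] at h2
    have h2TM : (2 * Tn S.card : ℤ) = (S.card : ℤ) * ((S.card : ℤ) - 1) := by
      have hq := two_Tn S.card
      zify [hm1] at hq
      linarith [hq]
    have h2TK : (2 * Tn K.card : ℤ) = (K.card : ℤ) * ((K.card : ℤ) - 1) := by
      rcases Nat.eq_zero_or_pos K.card with h0 | h0
      · simp [h0, Tn]
      · have hq := two_Tn K.card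
        zify [h0] at hq
        linarith [hq]
    have hmpos : (0 : ℤ) < S.card := by exact_mod_cast hm1
    have h1' : (0:ℤ) ≤ 8 * ((S.card : ℤ) * ∑ x ∈ K, y x - K.card * Tn S.card)
        + 4 * ((S.card : ℤ) * K.card * ((S.card : ℤ) - K.card)) := by linarith [h1]
    have h2' : (0:ℤ) ≤ -8 * ((S.card : ℤ) * ∑ x ∈ K, y x - K.card * Tn S.card)
        + 4 * ((S.card : ℤ) * K.card * ((S.card : ℤ) - K.card)) := by linarith [h2]
    have h8m : (0:ℤ) < 8 * S.card := by linarith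
    constructor
    · have e1eq : (8 * (S.card:ℤ)) * (∑ x ∈ K, y x) - (8 * (S.card:ℤ)) * Tn K.card
          = 8 * ((S.card : ℤ) * ∑ x ∈ K, y x - K.card * Tn S.card)
            + 4 * ((S.card : ℤ) * K.card * ((S.card : ℤ) - K.card)) := by
        linear_combination (4*(K.card:ℤ)) * h2TM - (4*(S.card:ℤ)) * h2TK
      have hmul : (8 * (S.card:ℤ)) * Tn K.card ≤ (8 * (S.card:ℤ)) * ∑ x ∈ K, y x := by linarith
      exact le_of_mul_le_mul_left hmul h8m
    · have e2eq : (8 * (S.card:ℤ)) * ((Tn K.card : ℤ) + K.card * ((S.card : ℤ) - K.card))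
            - (8 * (S.card:ℤ)) * (∑ x ∈ K, y x)
          = -8 * ((S.card : ℤ) * ∑ x ∈ K, y x - K.card * Tn S.card)
            + 4 * ((S.card : ℤ) * K.card * ((S.card : ℤ) - K.card)) := by
        linear_combination (4*(S.card:ℤ)) * h2TK - (4*(K.card:ℤ)) * h2TM
      have hmul : (8 * (S.card:ℤ)) * (∑ x ∈ K, y x)
          ≤ (8 * (S.card:ℤ)) * ((Tn K.card : ℤ) + K.card * ((S.card : ℤ) - K.card)) := by linarith
      exact le_of_mul_le_mul_left hmul h8m
  -- Step B: among minimizers, maximize the root coordinate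
  set A : Set (α → ℤ) := {y | y ∈ Sc ∧ F y = F y₁} with hAdef
  have hy₁A : y₁ ∈ A := ⟨hy₁Sc, rfl⟩
  have hminA : ∀ y ∈ A, ∀ z ∈ Sc, F y ≤ F z := by
    intro y hy z hz
    have h2 : F y = F y₁ := hy.2
    rw [h2]; exact hmin z hz
  have hT1 : (Tn 1 : ℤ) = 0 := by norm_num [Tn]
  have hbndr : ∀ y ∈ A, (0:ℤ) ≤ y r ∧ y r ≤ (S.card:ℤ) - 1 := by
    intro y hy
    have h := hStepA y hy.1 (hminA y hy) {r} (Finset.singleton_subset_iff.2 hr)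
    simp only [Finset.sum_singleton, Finset.card_singleton] at h
    rw [hT1] at h
    obtain ⟨ha, hb⟩ := h
    push_cast at hb
    constructor
    · linarith
    · linarith
  have hRne : ((fun y => (y r).toNat) '' A).Nonempty := ⟨_, y₁, hy₁A, rfl⟩
  have hRbdd : BddAbove ((fun y => (y r).toNat) '' A) := by
    refine ⟨S.card, ?_⟩
    rintro k ⟨y, hy, rfl⟩
    have h1 := (hbndr y hy).1
    have h2 := (hbndr y hy).2
    show (y r).toNat ≤ S.card
    omega
  obtain ⟨y₂, hy₂A, hy₂R⟩ := Nat.sSup_mem hRne hRbdd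
  have hmaxr : ∀ y ∈ A, (y r).toNat ≤ (y₂ r).toNat := by
    intro y hy
    have hmem : (y r).toNat ∈ ((fun y => (y r).toNat) '' A) := ⟨y, hy, rfl⟩
    have h2 := le_csSup hRbdd hmem
    have hy2R' : (y₂ r).toNat = sSup ((fun y => (y r).toNat) '' A) := hy₂R
    rw [hy2R']
    exact h2
  -- Step C : strictness at the root
  have hstrict : ∀ K ⊆ S, r ∈ K → K ≠ S → (Tn K.card : ℤ) + 1 ≤ ∑ x ∈ K, y₂ x := by
    intro K hK hrK hKS
    by_contra hcon
    push_neg at hcon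
    have hlow := (hStepA y₂ hy₂A.1 (hminA y₂ hy₂A) K hK).1
    have hEq : ∑ x ∈ K, y₂ x = (Tn K.card : ℤ) := by linarith
    have hkm : K.card < S.card := Finset.card_lt_card (hK.ssubset_of_ne hKS)
    have hFeq : F (fun x => y₂ x + 1 * lam K x) = F y₂ := by
      rw [hFval K hK y₂ hy₂A.1 1, hEq]
      have hq1 := two_Tn S.card
      zify [hm1] at hq1
      have h0 : 0 < K.card := Finset.card_pos.2 ⟨r, hrK⟩
      have hq2 := two_Tn K.card
      zify [h0] at hq2
      linear_combination (-4*(K.card:ℤ)) * hq1 + (4*(S.card:ℤ)) * hq2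
    have hy'A : (fun x => y₂ x + 1 * lam K x) ∈ A :=
      ⟨hmemlam K hK y₂ hy₂A.1 1, by rw [hFeq]; exact hy₂A.2⟩
    have hlr : lam K r = (S.card:ℤ) - K.card := by simp [hlamdef, hrK]
    have hcontr : (y₂ r + 1 * lam K r).toNat ≤ (y₂ r).toNat := hmaxr _ hy'A
    rw [hlr] at hcontr
    have h0r := (hbndr y₂ hy₂A).1
    have hkmZ : (K.card : ℤ) < (S.card:ℤ) := by exact_mod_cast hkm
    have e1 : ((y₂ r).toNat : ℤ) = y₂ r := Int.toNat_of_nonneg h0r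
    have e2 : (((y₂ r + 1 * ((S.card:ℤ) - K.card)).toNat) : ℤ)
        = y₂ r + 1 * ((S.card:ℤ) - K.card) := Int.toNat_of_nonneg (by linarith)
    have e3 : (((y₂ r + 1 * ((S.card:ℤ) - K.card)).toNat) : ℤ) ≤ ((y₂ r).toNat : ℤ) := by
      exact_mod_cast hcontr
    rw [e1, e2] at e3
    linarith
  -- assemble the natural-valued vector
  have hynn : ∀ x, 0 ≤ y₂ x := by
    intro x
    by_cases hx : x ∈ S
    · have h := (hStepA y₂ hy₂A.1 (hminA y₂ hy₂A) {x} (Finset.singleton_subset_iff.2 hx)).1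
      simp only [Finset.sum_singleton, Finset.card_singleton] at h
      rw [hT1] at h
      linarith
    · rw [hy₂A.1.1 x hx]
  have hcastsum : ∀ K : Finset α, ((∑ x ∈ K, (y₂ x).toNat : ℕ) : ℤ) = ∑ x ∈ K, y₂ x := by
    intro K
    push_cast
    exact Finset.sum_congr rfl (fun x _ => Int.toNat_of_nonneg (hynn x))
  refine ⟨fun x => (y₂ x).toNat, ⟨?_, ?_, ?_, ?_⟩, ?_⟩
  · intro x hx
    show (y₂ x).toNat = 0
    rw [hy₂A.1.1 x hx]
    rfl
  · have hsum := hy₂A.1.2.1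
    have : ((∑ x ∈ S, (y₂ x).toNat : ℕ) : ℤ) = ((Tn S.card : ℕ) : ℤ) := by
      rw [hcastsum S, hsum]
    exact_mod_cast this
  · intro K hK
    have h := (hStepA y₂ hy₂A.1 (hminA y₂ hy₂A) K hK).1
    rw [← hcastsum K] at h
    exact_mod_cast h
  · intro K hK hrK hKS
    have h := hstrict K hK hrK hKS
    rw [← hcastsum K] at h
    exact_mod_cast h
  · obtain ⟨c, hc⟩ := hy₂A.1.2.2
    refine ⟨c, fun i hi => ?_⟩
    have e : (((y₂ i).toNat : ℕ) : ℤ) = y₂ i := Int.toNat_of_nonneg (hynn i)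
    have e2 : (((y₂ i).toNat : ℕ) : ZMod S.card) = (((((y₂ i).toNat : ℕ) : ℤ)) : ZMod S.card) := by
      push_cast
      rfl
    rw [e2, e]
    exact hc i hi

end BsetF

namespace BsetF

variable {α : Type*} [DecidableEq α] {S : Finset α} {r : α}

lemma ncard_eq (hr : r ∈ S) : (BsetF S r).ncard = S.card ^ (S.card - 2) := by
  classical
  have hm1 : 1 ≤ S.card := Finset.card_pos.2 ⟨r, hr⟩
  haveI : NeZero S.card := ⟨by omega⟩
  have hbij : Function.Bijective (fun p : ↥(BsetF S r) × ZMod S.card =>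
      (fun i : ↥(S.erase r) => ((p.1.1 i.1 : ℕ) : ZMod S.card) + p.2)) := by
    constructor
    · rintro ⟨⟨d, hd⟩, j⟩ ⟨⟨d', hd'⟩, j'⟩ hpq
      have hpt : ∀ i ∈ S.erase r, (d i : ZMod S.card) + j = (d' i : ZMod S.card) + j' := by
        intro i hi
        exact congrFun hpq ⟨i, hi⟩
      obtain ⟨hdd, hjj⟩ := shift_unique hr hd hd' hpt
      subst hdd
      subst hjj
      rfl
    · intro f
      obtain ⟨d, hd, c, hc⟩ :=
        exists_rep hr (fun i => if hi : i ∈ S.erase r then f ⟨i, hi⟩ else 0)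
      refine ⟨⟨⟨d, hd⟩, -c⟩, ?_⟩
      funext i
      have h1 := hc i.1 i.2
      rw [dif_pos i.2] at h1
      show (d i.1 : ZMod S.card) + (-c) = f i
      rw [h1]
      ring
  have hcard := Nat.card_eq_of_bijective _ hbij
  rw [Nat.card_prod] at hcard
  have h1 : Nat.card (ZMod S.card) = S.card := Nat.card_zmod S.card
  have h2 : Nat.card (↥(S.erase r) → ZMod S.card) = S.card ^ (S.card - 1) := by
    rw [Nat.card_eq_fintype_card, Fintype.card_fun, Fintype.card_coe,
      Finset.card_erase_of_mem hr, ZMod.card]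
  have h3 : Nat.card ↥(BsetF S r) = (BsetF S r).ncard := Nat.card_coe_set_eq _
  rw [h1, h2, h3] at hcard
  rcases eq_or_lt_of_le hm1 with hq | hq
  · rw [← hq] at hcard ⊢
    simpa using hcard
  · have hs : S.card - 1 = (S.card - 2) + 1 := by omega
    rw [hs, pow_succ] at hcard
    exact Nat.eq_of_mul_eq_mul_right (by omega) hcard

end BsetF


/-- The degree `κ_I` of a nonempty subset `I` of vertices of the complete graph
`K_n`: the number of edges of `K_n` incident to `I`. -/
def kappaComplete (n : ℕ) (I : Finset (Fin n)) : ℕ :=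
  I.card * (I.card - 1) / 2 + I.card * (n - I.card)

/-- Counting the set `Z_J` arising in the computation of the top graded component
of the internal bizonotopal algebra of `K_n`: for a nonempty `J ⊆ [n−1]` of size
`ℓ`, the number of vectors `b` of total weight `C(n,2) − 1` with
`∑_{i∈I} b i ≤ κ_I − 1` for all nonempty `I`, equality for `I = J`, and strict
inequality for every `J'` with `J ⊊ J' ⊆ [n−1]`, equals
`ℓ^{ℓ−2} (n−ℓ)^{(n−ℓ)−2}`, the product of the numbers of spanning trees of `K_ℓ`
and `K_{n−ℓ}`. -/
theorem card_ZJ (n : ℕ) (hn : 4 ≤ n)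
    (J : Finset (Fin n)) (hJne : J.Nonempty) (hJlast : ∀ j ∈ J, (j : ℕ) ≠ n - 1) :
    Set.ncard {b : Fin n → ℕ |
        (∑ i : Fin n, b i = n * (n - 1) / 2 - 1) ∧
        (∀ I : Finset (Fin n), I.Nonempty → ∑ i ∈ I, b i + 1 ≤ kappaComplete n I) ∧
        (∑ j ∈ J, b j + 1 = kappaComplete n J) ∧
        (∀ J' : Finset (Fin n), J ⊂ J' → (∀ j ∈ J', (j : ℕ) ≠ n - 1) →
          ∑ j ∈ J', b j + 1 < kappaComplete n J')} =
      J.card ^ (J.card - 2) * (n - J.card) ^ ((n - J.card) - 2) := by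
  classical
  obtain ⟨r0, hr0⟩ := hJne
  have hn0 : 0 < n := by omega
  have hcardFin : Fintype.card (Fin n) = n := Fintype.card_fin n
  set v : Fin n := ⟨n - 1, by omega⟩ with hvdef
  have hvJ : v ∉ J := fun h => hJlast v h rfl
  have hl1 : 1 ≤ J.card := Finset.card_pos.2 ⟨r0, hr0⟩
  have hln : J.card ≤ n := by
    have := Finset.card_le_univ J
    rwa [hcardFin] at this
  have hm1 : 1 ≤ n - J.card := by
    have hsub : J ⊆ Finset.univ.erase v := fun x hx =>
      Finset.mem_erase.2 ⟨fun e => hvJ (e ▸ hx), Finset.mem_univ x⟩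
    have hle := Finset.card_le_card hsub
    rw [Finset.card_erase_of_mem (Finset.mem_univ v), Finset.card_univ, hcardFin] at hle
    omega
  have hvc : v ∈ Jᶜ := Finset.mem_compl.2 hvJ
  have hJc : Jᶜ.card = n - J.card := by rw [Finset.card_compl, hcardFin]
  have hkapdef : ∀ I : Finset (Fin n), kappaComplete n I = Tn I.card + I.card * (n - I.card) :=
    fun _ => rfl
  have hkap : ∀ a k : ℕ, a + k ≤ n →
      Tn (a + k) + (a + k) * (n - (a + k)) + a * k
        = (Tn a + a * (n - a)) + (Tn k + k * (n - k)) := by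
    intro a k hak
    obtain ⟨s, hs⟩ : ∃ s, n = a + k + s := ⟨n - (a + k), by omega⟩
    have h1 : n - (a + k) = s := by omega
    have h2 : n - a = k + s := by omega
    have h3 : n - k = a + s := by omega
    rw [h1, h2, h3, Tn_add]
    have e1 : (a + k) * s = a * s + k * s := by ring
    have e2 : a * (k + s) = a * k + a * s := by ring
    have e3 : k * (a + s) = k * a + k * s := by ring
    have e4 : a * k = k * a := by ring
    omega
  have hTnn : Tn n = Tn J.card + Tn (n - J.card) + J.card * (n - J.card) := by
    have h0 : J.card + (n - J.card) = n := by omega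
    conv_lhs => rw [← h0]
    exact Tn_add _ _
  have hTnpos : 1 ≤ Tn n := by
    have h1 := two_Tn n
    have h2 : 12 ≤ n * (n - 1) := by
      have := Nat.mul_le_mul (show 4 ≤ n by omega) (show 3 ≤ n - 1 by omega)
      omega
    omega
  have hind : ∀ K : Finset (Fin n), ∑ x ∈ K, (if x = r0 then 1 else 0) = if r0 ∈ K then 1 else 0 :=
    fun K => Finset.sum_ite_eq' K r0 (fun _ => 1)
  set G : (Fin n → ℕ) → (Fin n → ℕ) × (Fin n → ℕ) :=
    fun b => (fun x => if x ∈ J then (b x + (if x = r0 then 1 else 0)) - (n - J.card) else 0,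
              fun x => if x ∈ J then 0 else b x) with hG
  set Z : Set (Fin n → ℕ) := {b : Fin n → ℕ |
        (∑ i : Fin n, b i = n * (n - 1) / 2 - 1) ∧
        (∀ I : Finset (Fin n), I.Nonempty → ∑ i ∈ I, b i + 1 ≤ kappaComplete n I) ∧
        (∑ j ∈ J, b j + 1 = kappaComplete n J) ∧
        (∀ J' : Finset (Fin n), J ⊂ J' → (∀ j ∈ J', (j : ℕ) ≠ n - 1) →
          ∑ j ∈ J', b j + 1 < kappaComplete n J')} with hZ
  have hZsumJ : ∀ b ∈ Z, ∑ x ∈ J, b x + 1 = Tn J.card + J.card * (n - J.card) := by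
    intro b hb
    have h1 := hb.2.2.1
    rwa [hkapdef J] at h1
  have hZsumtot : ∀ b ∈ Z, ∑ i : Fin n, b i + 1 = Tn n := by
    intro b hb
    have h1 := hb.1
    have h2 : n * (n - 1) / 2 = Tn n := rfl
    omega
  have hZsumJc : ∀ b ∈ Z, ∑ x ∈ Jᶜ, b x = Tn (n - J.card) := by
    intro b hb
    have h1 := hZsumtot b hb
    have h2 := hZsumJ b hb
    have h3 : ∑ x ∈ Jᶜ, b x + ∑ x ∈ J, b x = ∑ i : Fin n, b i :=
      Finset.sum_compl_add_sum J b
    omega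
  -- pointwise lower bound on J-coordinates
  have hbd : ∀ b ∈ Z, ∀ i ∈ J, n - J.card ≤ b i + (if i = r0 then 1 else 0) := by
    intro b hb i hi
    rcases eq_or_lt_of_le hl1 with h1 | h2
    · obtain ⟨x, hx⟩ := Finset.card_eq_one.1 h1.symm
      have hix : i = x := by rw [hx] at hi; simpa using hi
      have hrx : r0 = x := by rw [hx] at hr0; simpa using hr0
      have hir : i = r0 := by rw [hix, hrx]
      have hsJ := hZsumJ b hb
      rw [hx] at hsJ
      simp only [Finset.sum_singleton, Finset.card_singleton] at hsJ
      have hc1 : J.card = 1 := h1.symm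
      have hT1 : Tn 1 = 0 := rfl
      rw [if_pos hir]
      rw [← hix] at hsJ
      omega
    · have hie : (J.erase i).Nonempty := by
        rw [← Finset.card_pos, Finset.card_erase_of_mem hi]; omega
      have hup := hb.2.1 (J.erase i) hie
      rw [hkapdef] at hup
      have hsplit : ∑ x ∈ J.erase i, b x + b i = ∑ x ∈ J, b x :=
        Finset.sum_erase_add J b hi
      have hcard : (J.erase i).card = J.card - 1 := Finset.card_erase_of_mem hi
      rw [hcard] at hup
      have hsJ := hZsumJ b hb
      have hTl : Tn J.card = Tn (J.card - 1) + (J.card - 1) := by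
        have h4 := Tn_succ (J.card - 1)
        have h5 : J.card - 1 + 1 = J.card := by omega
        rw [h5] at h4; omega
      have hnl : n - (J.card - 1) = (n - J.card) + 1 := by omega
      rw [hnl] at hup
      have hprod : (J.card - 1) * ((n - J.card) + 1)
          = (J.card - 1) * (n - J.card) + (J.card - 1) := by ring
      have hprod2 : J.card * (n - J.card)
          = (J.card - 1) * (n - J.card) + (n - J.card) := by
        have h6 : J.card - 1 + 1 = J.card := by omega
        have h7 : (J.card - 1 + 1) * (n - J.card)
            = (J.card - 1) * (n - J.card) + (n - J.card) := by ring
        rw [h6] at h7; exact h7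
      have h8 : n - J.card ≤ b i := by omega
      omega
  -- lower bound on sums over proper subsets of J
  have hKboundJ : ∀ b ∈ Z, ∀ K, K ⊆ J → K ≠ J →
      Tn K.card + K.card * (n - J.card) ≤ ∑ x ∈ K, b x := by
    intro b hb K hK hKJ
    have hK2ne : (J \ K).Nonempty := by
      rw [Finset.sdiff_nonempty]
      intro hc
      exact hKJ (Finset.Subset.antisymm hK hc)
    have hupK2 := hb.2.1 (J \ K) hK2ne
    rw [hkapdef] at hupK2
    have hsplit : ∑ x ∈ J \ K, b x + ∑ x ∈ K, b x = ∑ x ∈ J, b x := Finset.sum_sdiff hK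
    have hcards : (J \ K).card + K.card = J.card := by
      rw [Finset.card_sdiff_of_subset hK]
      have := Finset.card_le_card hK
      omega
    have hnn : n - (J \ K).card = (n - J.card) + K.card := by omega
    rw [hnn] at hupK2
    have hTJ : Tn J.card = Tn (J \ K).card + Tn K.card + (J \ K).card * K.card := by
      conv_lhs => rw [← hcards]
      exact Tn_add _ _
    have e1 : (J \ K).card * ((n - J.card) + K.card)
        = (J \ K).card * (n - J.card) + (J \ K).card * K.card := by ring
    have e2 : ((J \ K).card + K.card) * (n - J.card)
        = (J \ K).card * (n - J.card) + K.card * (n - J.card) := by ring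
    rw [hcards] at e2
    have hsJ := hZsumJ b hb
    omega
  -- lower bound on sums over subsets of the complement
  have hKC1 : ∀ b ∈ Z, ∀ K, K ⊆ Jᶜ → Tn K.card ≤ ∑ x ∈ K, b x := by
    intro b hb K hK
    have hsplit : ∑ x ∈ Jᶜ \ K, b x + ∑ x ∈ K, b x = ∑ x ∈ Jᶜ, b x := Finset.sum_sdiff hK
    have hJcs := hZsumJc b hb
    have hK2sub : Jᶜ \ K ⊆ Jᶜ := sdiff_subset
    have hdisj : Disjoint J (Jᶜ \ K) := by
      refine Finset.disjoint_left.2 (fun x hx hx2 => ?_)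
      exact (Finset.mem_compl.1 (hK2sub hx2)) hx
    have hcards : (Jᶜ \ K).card + K.card = n - J.card := by
      rw [Finset.card_sdiff_of_subset hK]
      have h5 := Finset.card_le_card hK
      rw [hJc] at h5 ⊢
      omega
    have hIsum : ∑ x ∈ J ∪ (Jᶜ \ K), b x = ∑ x ∈ J, b x + ∑ x ∈ Jᶜ \ K, b x :=
      Finset.sum_union hdisj
    have hIcard : (J ∪ (Jᶜ \ K)).card = J.card + (Jᶜ \ K).card :=
      Finset.card_union_of_disjoint hdisj
    have hsJ := hZsumJ b hb
    have hnlk : n - (J.card + (Jᶜ \ K).card) = K.card := by omega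
    have hTadd : Tn (J.card + (Jᶜ \ K).card)
        = Tn J.card + Tn (Jᶜ \ K).card + J.card * (Jᶜ \ K).card := Tn_add _ _
    have hprod : (J.card + (Jᶜ \ K).card) * K.card
        = J.card * K.card + (Jᶜ \ K).card * K.card := by ring
    have hTm : Tn (n - J.card) = Tn K.card + Tn (Jᶜ \ K).card + K.card * (Jᶜ \ K).card := by
      have h0 : K.card + (Jᶜ \ K).card = n - J.card := by omega
      conv_lhs => rw [← h0]
      exact Tn_add _ _
    have hlm : J.card * (n - J.card) = J.card * K.card + J.card * (Jᶜ \ K).card := by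
      have h0 : K.card + (Jᶜ \ K).card = n - J.card := by omega
      rw [← h0]; ring
    have hcomm : K.card * (Jᶜ \ K).card = (Jᶜ \ K).card * K.card := by ring
    have hI := hb.2.1 (J ∪ (Jᶜ \ K)) ⟨r0, Finset.mem_union_left _ hr0⟩
    rw [hkapdef, hIsum, hIcard, hnlk, hTadd, hprod] at hI
    omega
  -- strict lower bound on sums over subsets of the complement containing v
  have hKC2 : ∀ b ∈ Z, ∀ K, K ⊆ Jᶜ → v ∈ K → K ≠ Jᶜ →
      Tn K.card + 1 ≤ ∑ x ∈ K, b x := by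
    intro b hb K hK hvK hKJc
    have hsplit : ∑ x ∈ Jᶜ \ K, b x + ∑ x ∈ K, b x = ∑ x ∈ Jᶜ, b x := Finset.sum_sdiff hK
    have hJcs := hZsumJc b hb
    have hK2sub : Jᶜ \ K ⊆ Jᶜ := sdiff_subset
    have hK2ne : (Jᶜ \ K).Nonempty := by
      rw [Finset.sdiff_nonempty]
      intro hc
      exact hKJc (Finset.Subset.antisymm hK hc)
    have hvK2 : v ∉ Jᶜ \ K := fun h => (Finset.mem_sdiff.1 h).2 hvK
    have hdisj : Disjoint J (Jᶜ \ K) := by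
      refine Finset.disjoint_left.2 (fun x hx hx2 => ?_)
      exact (Finset.mem_compl.1 (hK2sub hx2)) hx
    have hcards : (Jᶜ \ K).card + K.card = n - J.card := by
      rw [Finset.card_sdiff_of_subset hK]
      have h5 := Finset.card_le_card hK
      rw [hJc] at h5 ⊢
      omega
    have hIsum : ∑ x ∈ J ∪ (Jᶜ \ K), b x = ∑ x ∈ J, b x + ∑ x ∈ Jᶜ \ K, b x :=
      Finset.sum_union hdisj
    have hIcard : (J ∪ (Jᶜ \ K)).card = J.card + (Jᶜ \ K).card :=
      Finset.card_union_of_disjoint hdisj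
    have hsJ := hZsumJ b hb
    have hnlk : n - (J.card + (Jᶜ \ K).card) = K.card := by omega
    have hTadd : Tn (J.card + (Jᶜ \ K).card)
        = Tn J.card + Tn (Jᶜ \ K).card + J.card * (Jᶜ \ K).card := Tn_add _ _
    have hprod : (J.card + (Jᶜ \ K).card) * K.card
        = J.card * K.card + (Jᶜ \ K).card * K.card := by ring
    have hTm : Tn (n - J.card) = Tn K.card + Tn (Jᶜ \ K).card + K.card * (Jᶜ \ K).card := by
      have h0 : K.card + (Jᶜ \ K).card = n - J.card := by omega
      conv_lhs => rw [← h0]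
      exact Tn_add _ _
    have hlm : J.card * (n - J.card) = J.card * K.card + J.card * (Jᶜ \ K).card := by
      have h0 : K.card + (Jᶜ \ K).card = n - J.card := by omega
      rw [← h0]; ring
    have hcomm : K.card * (Jᶜ \ K).card = (Jᶜ \ K).card * K.card := by ring
    have hss : J ⊂ J ∪ (Jᶜ \ K) := by
      refine (Finset.ssubset_iff_of_subset Finset.subset_union_left).2 ?_
      obtain ⟨x, hx⟩ := hK2ne
      exact ⟨x, Finset.mem_union_right _ hx, Finset.mem_compl.1 (hK2sub hx)⟩
    have hlast : ∀ j ∈ J ∪ (Jᶜ \ K), (j : ℕ) ≠ n - 1 := by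
      intro j hj
      rcases Finset.mem_union.1 hj with h5 | h5
      · exact hJlast j h5
      · intro hcon
        have hjv : j = v := Fin.ext hcon
        rw [hjv] at h5
        exact hvK2 h5
    have hI := hb.2.2.2 (J ∪ (Jᶜ \ K)) hss hlast
    rw [hkapdef, hIsum, hIcard, hnlk, hTadd, hprod] at hI
    omega
  -- the forward map lands in the product
  have hmaps : ∀ b ∈ Z, G b ∈ (BsetF J r0) ×ˢ (BsetF Jᶜ v) := by
    intro b hb
    have hrec : ∀ x ∈ J, (if x ∈ J then (b x + (if x = r0 then 1 else 0)) - (n - J.card) else 0)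
        + (n - J.card) = b x + (if x = r0 then 1 else 0) := by
      intro x hx
      rw [if_pos hx]
      have := hbd b hb x hx
      omega
    have hsumc : ∀ K, K ⊆ J →
        (∑ x ∈ K, (if x ∈ J then (b x + (if x = r0 then 1 else 0)) - (n - J.card) else 0))
          + K.card * (n - J.card)
        = ∑ x ∈ K, b x + (if r0 ∈ K then 1 else 0) := by
      intro K hK
      have h4 : ∑ x ∈ K, ((if x ∈ J then (b x + (if x = r0 then 1 else 0)) - (n - J.card) else 0)
          + (n - J.card)) = ∑ x ∈ K, (b x + (if x = r0 then 1 else 0)) :=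
        Finset.sum_congr rfl (fun x hx => hrec x (hK hx))
      rw [Finset.sum_add_distrib, Finset.sum_add_distrib, Finset.sum_const, smul_eq_mul,
        hind K] at h4
      omega
    refine Set.mem_prod.2 ⟨?_, ?_⟩
    · refine ⟨?_, ?_, ?_, ?_⟩
      · intro x hx
        show (if x ∈ J then (b x + (if x = r0 then 1 else 0)) - (n - J.card) else 0) = 0
        rw [if_neg hx]
      · show (∑ x ∈ J, (if x ∈ J then (b x + (if x = r0 then 1 else 0)) - (n - J.card) else 0))
            = Tn J.card
        have h5 := hsumc J (subset_refl J)
        rw [if_pos hr0] at h5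
        have hsJ := hZsumJ b hb
        omega
      · intro K hK
        show Tn K.card ≤ ∑ x ∈ K, (if x ∈ J then (b x + (if x = r0 then 1 else 0)) - (n - J.card) else 0)
        by_cases hKJ : K = J
        · subst hKJ
          have h5 := hsumc K (subset_refl K)
          rw [if_pos hr0] at h5
          have hsJ := hZsumJ b hb
          omega
        · have h5 := hsumc K hK
          have h6 := hKboundJ b hb K hK hKJ
          have h7 : (if r0 ∈ K then 1 else 0) ≤ 1 := by split <;> omega
          omega
      · intro K hK hrK hKJ
        show Tn K.card + 1 ≤ ∑ x ∈ K, (if x ∈ J then (b x + (if x = r0 then 1 else 0)) - (n - J.card) else 0)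
        have h5 := hsumc K hK
        rw [if_pos hrK] at h5
        have h6 := hKboundJ b hb K hK hKJ
        omega
    · refine ⟨?_, ?_, ?_, ?_⟩
      · intro x hx
        show (if x ∈ J then 0 else b x) = 0
        have hxJ : x ∈ J := by
          by_contra hxx
          exact hx (Finset.mem_compl.2 hxx)
        rw [if_pos hxJ]
      · show (∑ x ∈ Jᶜ, (if x ∈ J then 0 else b x)) = Tn Jᶜ.card
        have e : ∑ x ∈ Jᶜ, (if x ∈ J then 0 else b x) = ∑ x ∈ Jᶜ, b x :=
          Finset.sum_congr rfl (fun x hx => if_neg (Finset.mem_compl.1 hx))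
        rw [e, hZsumJc b hb, hJc]
      · intro K hK
        show Tn K.card ≤ ∑ x ∈ K, (if x ∈ J then 0 else b x)
        have e : ∑ x ∈ K, (if x ∈ J then 0 else b x) = ∑ x ∈ K, b x :=
          Finset.sum_congr rfl (fun x hx => if_neg (Finset.mem_compl.1 (hK hx)))
        rw [e]
        exact hKC1 b hb K hK
      · intro K hK hvK hKne
        show Tn K.card + 1 ≤ ∑ x ∈ K, (if x ∈ J then 0 else b x)
        have e : ∑ x ∈ K, (if x ∈ J then 0 else b x) = ∑ x ∈ K, b x :=
          Finset.sum_congr rfl (fun x hx => if_neg (Finset.mem_compl.1 (hK hx)))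
        rw [e]
        exact hKC2 b hb K hK hvK hKne
  -- injectivity
  have hinj : Set.InjOn G Z := by
    intro b hb b' hb' hGG
    funext x
    by_cases hx : x ∈ J
    · have e1 : (if x ∈ J then (b x + (if x = r0 then 1 else 0)) - (n - J.card) else 0)
          = (if x ∈ J then (b' x + (if x = r0 then 1 else 0)) - (n - J.card) else 0) :=
        congrFun (congrArg Prod.fst hGG) x
      rw [if_pos hx, if_pos hx] at e1
      have hb1 := hbd b hb x hx
      have hb2 := hbd b' hb' x hx
      by_cases hxr : x = r0
      · rw [if_pos hxr] at e1 hb1 hb2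
        omega
      · rw [if_neg hxr] at e1 hb1 hb2
        omega
    · have e2 : (if x ∈ J then 0 else b x) = (if x ∈ J then 0 else b' x) :=
        congrFun (congrArg Prod.snd hGG) x
      rw [if_neg hx, if_neg hx] at e2
      exact e2
  -- surjectivity onto the product
  have hsurj : Set.SurjOn G Z ((BsetF J r0) ×ˢ (BsetF Jᶜ v)) := by
    rintro ⟨c, d⟩ hcd
    have hc : c ∈ BsetF J r0 := hcd.1
    have hd : d ∈ BsetF Jᶜ v := hcd.2
    set b : Fin n → ℕ := fun x => if x ∈ J then
        (if x = r0 then c x + (n - J.card) - 1 else c x + (n - J.card)) else d x with hbdef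
    have hrec : ∀ x ∈ J, b x + (if x = r0 then 1 else 0) = c x + (n - J.card) := by
      intro x hx
      rw [hbdef]
      simp only [if_pos hx]
      by_cases hxr : x = r0
      · rw [if_pos hxr, if_pos hxr]; omega
      · rw [if_neg hxr, if_neg hxr]; omega
    have hrecC : ∀ x, x ∉ J → b x = d x := by
      intro x hx
      rw [hbdef]
      simp only [if_neg hx]
    have hsumJb : ∀ K, K ⊆ J → ∑ x ∈ K, b x + (if r0 ∈ K then 1 else 0)
        = ∑ x ∈ K, c x + K.card * (n - J.card) := by
      intro K hK
      have h4 : ∑ x ∈ K, (b x + (if x = r0 then 1 else 0))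
          = ∑ x ∈ K, (c x + (n - J.card)) :=
        Finset.sum_congr rfl (fun x hx => hrec x (hK hx))
      rw [Finset.sum_add_distrib, Finset.sum_add_distrib, Finset.sum_const, smul_eq_mul,
        hind K] at h4
      omega
    have hsumKb : ∀ K, K ⊆ Jᶜ → ∑ x ∈ K, b x = ∑ x ∈ K, d x := by
      intro K hK
      exact Finset.sum_congr rfl (fun x hx => hrecC x (Finset.mem_compl.1 (hK hx)))
    have hcJ : ∑ x ∈ J, c x = Tn J.card := hc.2.1
    have hdC : ∑ x ∈ Jᶜ, d x = Tn (n - J.card) := by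
      have h5 := hd.2.1
      rwa [hJc] at h5
    have hbJ : ∑ x ∈ J, b x + 1 = Tn J.card + J.card * (n - J.card) := by
      have h5 := hsumJb J (subset_refl J)
      rw [if_pos hr0, hcJ] at h5
      omega
    have hbC : ∑ x ∈ Jᶜ, b x = Tn (n - J.card) := by
      rw [hsumKb Jᶜ (subset_refl _), hdC]
    have hAbound : ∀ A, A ⊆ J → A.Nonempty →
        ∑ x ∈ A, b x + 1 ≤ Tn A.card + A.card * (n - A.card) := by
      intro A hA hAne
      have hcards : (J \ A).card + A.card = J.card := by
        rw [Finset.card_sdiff_of_subset hA]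
        have := Finset.card_le_card hA
        omega
      have hTJ : Tn J.card = Tn (J \ A).card + Tn A.card + (J \ A).card * A.card := by
        conv_lhs => rw [← hcards]
        exact Tn_add _ _
      have hna : n - A.card = (J \ A).card + (n - J.card) := by omega
      have hprodA : A.card * (n - A.card)
          = A.card * (J \ A).card + A.card * (n - J.card) := by
        rw [hna]; ring
      have hcomm : A.card * (J \ A).card = (J \ A).card * A.card := by ring
      have h5 := hsumJb A hA
      by_cases hrA : r0 ∈ A
      · rw [if_pos hrA] at h5
        have h6 := BsetF.upper hc hA
        omega
      · rw [if_neg hrA] at h5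
        have h6 := BsetF.upper_strict hc hA hr0 hrA hAne
        omega
    have hKbound : ∀ K, K ⊆ Jᶜ → K.Nonempty →
        ∑ x ∈ K, d x + Tn ((Jᶜ \ K).card) + (if v ∈ K then 0 else 1)
          ≤ Tn (n - J.card) := by
      intro K hK hKne
      by_cases hvK : v ∈ K
      · rw [if_pos hvK]
        have h6 := BsetF.upper hd hK
        rw [hJc] at h6
        omega
      · rw [if_neg hvK]
        have h6 := BsetF.upper_strict hd hK hvc hvK hKne
        rw [hJc] at h6
        omega
    have hbZ : b ∈ Z := by
      rw [hZ]
      refine ⟨?_, ?_, ?_, ?_⟩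
      · have h3 : ∑ x ∈ Jᶜ, b x + ∑ x ∈ J, b x = ∑ i : Fin n, b i :=
          Finset.sum_compl_add_sum J b
        have h2 : n * (n - 1) / 2 = Tn n := rfl
        omega
      · intro I hIne
        rw [hkapdef]
        have hsplit : ∑ x ∈ I ∩ J, b x + ∑ x ∈ I \ J, b x = ∑ x ∈ I, b x :=
          Finset.sum_inter_add_sum_sdiff I J b
        have hcardI : (I ∩ J).card + (I \ J).card = I.card :=
          Finset.card_inter_add_card_sdiff I J
        have hIJc : I \ J ⊆ Jᶜ := fun x hx => Finset.mem_compl.2 (Finset.mem_sdiff.1 hx).2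
        have hIJ : I ∩ J ⊆ J := Finset.inter_subset_right
        have hIn : I.card ≤ n := by
          have := Finset.card_le_univ I
          rwa [hcardFin] at this
        by_cases hKem : (I \ J) = ∅
        · have hsubJ : I ⊆ J := Finset.sdiff_eq_empty_iff_subset.1 hKem
          exact hAbound I hsubJ hIne
        · have hKne : (I \ J).Nonempty := Finset.nonempty_of_ne_empty hKem
          have hkapI := hkap (I ∩ J).card (I \ J).card (by omega)
          rw [hcardI] at hkapI
          have hcards2 : (Jᶜ \ (I \ J)).card + (I \ J).card = n - J.card := by
            rw [Finset.card_sdiff_of_subset hIJc]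
            have h5 := Finset.card_le_card hIJc
            rw [hJc] at h5 ⊢
            omega
          have hTmexp : Tn (n - J.card) = Tn (I \ J).card + Tn (Jᶜ \ (I \ J)).card
              + (I \ J).card * (Jᶜ \ (I \ J)).card := by
            have h0 : (I \ J).card + (Jᶜ \ (I \ J)).card = n - J.card := by omega
            conv_lhs => rw [← h0]
            exact Tn_add _ _
          have hnk : n - (I \ J).card = (Jᶜ \ (I \ J)).card + J.card := by omega
          have hprodK : (I \ J).card * (n - (I \ J).card)
              = (I \ J).card * (Jᶜ \ (I \ J)).card + (I \ J).card * J.card := by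
            rw [hnk]; ring
          have hcomm2 : (I \ J).card * J.card = J.card * (I \ J).card := by ring
          have hpos : 1 ≤ (I \ J).card * J.card := by
            have := Nat.mul_le_mul (Finset.card_pos.2 hKne) hl1
            omega
          have hKd := hKbound (I \ J) hIJc hKne
          have hKb := hsumKb (I \ J) hIJc
          have hite : (if v ∈ (I \ J) then 0 else 1) + (if v ∈ (I \ J) then 1 else 0) = 1 := by
            split <;> omega
          by_cases hAem : (I ∩ J) = ∅
          · have hA0 : (I ∩ J).card = 0 := by rw [hAem]; rfl
            have hAs : ∑ x ∈ I ∩ J, b x = 0 := by rw [hAem]; rfl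
            rw [hA0] at hkapI
            have hT0 : Tn 0 = 0 := rfl
            rw [hT0] at hkapI
            omega
          · have hAne : (I ∩ J).Nonempty := Finset.nonempty_of_ne_empty hAem
            have hA := hAbound (I ∩ J) hIJ hAne
            have hmul : (I ∩ J).card * (I \ J).card ≤ J.card * (I \ J).card :=
              Nat.mul_le_mul_right _ (Finset.card_le_card hIJ)
            omega
      · rw [hkapdef]
        exact hbJ
      · intro J' hss hlast
        rw [hkapdef]
        have hJJ' : J ⊆ J' := hss.subset
        have hKsub : J' \ J ⊆ Jᶜ := fun x hx => Finset.mem_compl.2 (Finset.mem_sdiff.1 hx).2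
        have hKne : (J' \ J).Nonempty := by
          obtain ⟨x, hx1, hx2⟩ := Finset.exists_of_ssubset hss
          exact ⟨x, Finset.mem_sdiff.2 ⟨hx1, hx2⟩⟩
        have hvK : v ∉ J' \ J := by
          intro h5
          exact (hlast v (Finset.mem_sdiff.1 h5).1) rfl
        have hsplit : ∑ x ∈ J' \ J, b x + ∑ x ∈ J, b x = ∑ x ∈ J', b x :=
          Finset.sum_sdiff hJJ'
        have hcards : J.card + (J' \ J).card = J'.card := by
          rw [Finset.card_sdiff_of_subset hJJ']
          have := Finset.card_le_card hJJ'
          omega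
        have hJ'n : J'.card ≤ n := by
          have := Finset.card_le_univ J'
          rwa [hcardFin] at this
        have hkapI := hkap J.card (J' \ J).card (by omega)
        rw [hcards] at hkapI
        have hKd := hKbound (J' \ J) hKsub hKne
        rw [if_neg hvK] at hKd
        have hKb := hsumKb (J' \ J) hKsub
        have hcards2 : (Jᶜ \ (J' \ J)).card + (J' \ J).card = n - J.card := by
          rw [Finset.card_sdiff_of_subset hKsub]
          have h5 := Finset.card_le_card hKsub
          rw [hJc] at h5 ⊢
          omega
        have hTmexp : Tn (n - J.card) = Tn (J' \ J).card + Tn (Jᶜ \ (J' \ J)).card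
            + (J' \ J).card * (Jᶜ \ (J' \ J)).card := by
          have h0 : (J' \ J).card + (Jᶜ \ (J' \ J)).card = n - J.card := by omega
          conv_lhs => rw [← h0]
          exact Tn_add _ _
        have hnk : n - (J' \ J).card = (Jᶜ \ (J' \ J)).card + J.card := by omega
        have hprodK : (J' \ J).card * (n - (J' \ J).card)
            = (J' \ J).card * (Jᶜ \ (J' \ J)).card + (J' \ J).card * J.card := by
          rw [hnk]; ring
        have hcomm2 : (J' \ J).card * J.card = J.card * (J' \ J).card := by ring
        omega
    refine ⟨b, hbZ, ?_⟩
    have h1 : (fun x => if x ∈ J then (b x + (if x = r0 then 1 else 0)) - (n - J.card) else 0)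
        = c := by
      funext x
      by_cases hx : x ∈ J
      · rw [if_pos hx]
        have h5 := hrec x hx
        have h6 : 1 ≤ n - J.card := hm1
        omega
      · rw [if_neg hx]
        exact (hc.1 x hx).symm
    have h2 : (fun x => if x ∈ J then 0 else b x) = d := by
      funext x
      by_cases hx : x ∈ J
      · rw [if_pos hx]
        have hxc : x ∉ Jᶜ := fun hxx => (Finset.mem_compl.1 hxx) hx
        exact (hd.1 x hxc).symm
      · rw [if_neg hx]
        exact hrecC x hx
    show G b = (c, d)
    have h3 : G b = (fun x => if x ∈ J then (b x + (if x = r0 then 1 else 0)) - (n - J.card) else 0,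
        fun x => if x ∈ J then 0 else b x) := rfl
    rw [h3, h1, h2]
  -- conclusion
  have himg : G '' Z = (BsetF J r0) ×ˢ (BsetF Jᶜ v) := by
    apply Set.Subset.antisymm
    · rintro p ⟨b, hb, rfl⟩
      exact hmaps b hb
    · exact hsurj
  have h1 : Z.ncard = ((BsetF J r0) ×ˢ (BsetF Jᶜ v)).ncard := by
    rw [← himg, Set.ncard_image_of_injOn hinj]
  have h2 : ((BsetF J r0) ×ˢ (BsetF Jᶜ v)).ncard
      = (BsetF J r0).ncard * (BsetF Jᶜ v).ncard := by
    rw [← Nat.card_coe_set_eq, ← Nat.card_coe_set_eq, ← Nat.card_coe_set_eq,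
      Nat.card_congr (Equiv.Set.prod _ _), Nat.card_prod]
  rw [h1, h2, BsetF.ncard_eq hr0, BsetF.ncard_eq hvc, hJc]
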